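/- Let M ⊂ P_n be a codimension-one subspace containing the monomials xʲ for 0 ≤ j ≤ λ-1 and for n-μ+1 ≤ j ≤ n, and suppose the polynomial q_M defined by γ(q_M, v) = 0 for all v in M equals (-1)^λ C(n,λ) x^{n-λ} - ∑_{j=λ+1}^{n-μ} (-1)ʲ C(n,j) β_j x^{n-j}. Then the monomials {xʲ : 0 ≤ j ≤ λ-1}, binomials {xʲ + β_j x^λ : λ+1 ≤ j ≤ n-μ}, and monomials {xʲ : n-μ+1 ≤ j ≤ n} form a basis of M. -/

import Mathlib

open Polynomial Finset

/-- The bilinear form `γ` on `P_n` with `n!·γ(xʲ/j!, xᵏ/k!) = (-1)ʲ` if `j+k = n`, else `0`. -/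
noncomputable def bochnerForm (n : ℕ) (P Q : Polynomial ℝ) : ℝ :=
  ∑ j ∈ Finset.range (n + 1),
    (-1 : ℝ) ^ j * ((j.factorial : ℝ) * ((n - j).factorial : ℝ) / (n.factorial : ℝ))
      * P.coeff j * Q.coeff (n - j)

/-- `bochnerForm n P` as a linear map in the second argument. -/
noncomputable def bochnerL (n : ℕ) (P : Polynomial ℝ) : Polynomial ℝ →ₗ[ℝ] ℝ where
  toFun := bochnerForm n P
  map_add' Q R := by
    simp [bochnerForm, coeff_add, mul_add, Finset.sum_add_distrib]
  map_smul' c Q := by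
    simp only [bochnerForm, coeff_smul, smul_eq_mul, RingHom.id_apply, Finset.mul_sum]
    exact Finset.sum_congr rfl fun j _ => by ring

lemma bochnerL_apply (n : ℕ) (P Q : Polynomial ℝ) : bochnerL n P Q = bochnerForm n P Q := rfl

lemma bochner_X_pow (n k : ℕ) (P : Polynomial ℝ) (hk : k ≤ n) :
    bochnerForm n P (X ^ k) =
      (-1 : ℝ) ^ (n - k) * (((n - k).factorial : ℝ) * (k.factorial : ℝ) / (n.factorial : ℝ))
        * P.coeff (n - k) := by
  unfold bochnerForm
  rw [Finset.sum_eq_single (n - k)]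
  · rw [Nat.sub_sub_self hk, coeff_X_pow, if_pos rfl]
    ring
  · intro j hj hne
    rw [Finset.mem_range] at hj
    rw [coeff_X_pow, if_neg (by omega), mul_zero]
  · intro h
    exact absurd (Finset.mem_range.mpr (by omega)) h

section qM
variable (n l m : ℕ) (β : ℕ → ℝ)

lemma qM_coeff_nl (hl : l ≤ n) (hlm : l + m ≤ n) :
    (C ((-1 : ℝ) ^ l * (n.choose l : ℝ)) * X ^ (n - l)
      - ∑ j ∈ Finset.Icc (l + 1) (n - m),
          C ((-1 : ℝ) ^ j * (n.choose j : ℝ) * β j) * X ^ (n - j)).coeff (n - l)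
      = (-1 : ℝ) ^ l * (n.choose l : ℝ) := by
  rw [coeff_sub, coeff_C_mul, coeff_X_pow, if_pos rfl, mul_one, finset_sum_coeff]
  rw [Finset.sum_eq_zero, sub_zero]
  intro j hj
  rw [Finset.mem_Icc] at hj
  rw [coeff_C_mul, coeff_X_pow, if_neg (by omega), mul_zero]

lemma qM_coeff_nj (j : ℕ) (hj : l + 1 ≤ j) (hj2 : j ≤ n - m) (hlm : l + m ≤ n) :
    (C ((-1 : ℝ) ^ l * (n.choose l : ℝ)) * X ^ (n - l)
      - ∑ i ∈ Finset.Icc (l + 1) (n - m),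
          C ((-1 : ℝ) ^ i * (n.choose i : ℝ) * β i) * X ^ (n - i)).coeff (n - j)
      = -((-1 : ℝ) ^ j * (n.choose j : ℝ) * β j) := by
  rw [coeff_sub, coeff_C_mul, coeff_X_pow, if_neg (by omega), mul_zero, finset_sum_coeff,
    zero_sub, neg_inj]
  rw [Finset.sum_eq_single j]
  · rw [coeff_C_mul, coeff_X_pow, if_pos rfl, mul_one]
  · intro i hi hne
    rw [Finset.mem_Icc] at hi
    rw [coeff_C_mul, coeff_X_pow, if_neg (by omega), mul_zero]
  · intro h
    exact absurd (Finset.mem_Icc.mpr ⟨hj, hj2⟩) h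

end qM

lemma fact_choose_one (n k : ℕ) (hk : k ≤ n) :
    (((n - k).factorial : ℝ) * (k.factorial : ℝ) / (n.factorial : ℝ)) * (n.choose k : ℝ) = 1 := by
  have h := Nat.choose_mul_factorial_mul_factorial hk
  have h' : (n.choose k : ℝ) * (k.factorial : ℝ) * ((n - k).factorial : ℝ) = (n.factorial : ℝ) := by
    exact_mod_cast congrArg (Nat.cast : ℕ → ℝ) h
  have hne : (n.factorial : ℝ) ≠ 0 := Nat.cast_ne_zero.mpr (Nat.factorial_ne_zero n)
  field_simp
  linarith

section vals
variable (n l m : ℕ) (β : ℕ → ℝ) (qM : Polynomial ℝ)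
variable (hq : qM = C ((-1 : ℝ) ^ l * (n.choose l : ℝ)) * X ^ (n - l)
      - ∑ j ∈ Finset.Icc (l + 1) (n - m), C ((-1 : ℝ) ^ j * (n.choose j : ℝ) * β j) * X ^ (n - j))
variable (hlm : l + m ≤ n)
include hq hlm

lemma phi_X_l : bochnerForm n qM (X ^ l) = (-1 : ℝ) ^ n := by
  have hl : l ≤ n := by omega
  rw [bochner_X_pow n l qM hl, hq, qM_coeff_nl n l m β hl hlm]
  have h1 := fact_choose_one n l hl
  have h2 : (-1 : ℝ) ^ (n - l) * (-1 : ℝ) ^ l = (-1 : ℝ) ^ n := by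
    rw [← pow_add, Nat.sub_add_cancel hl]
  calc (-1 : ℝ) ^ (n - l) * (((n - l).factorial : ℝ) * (l.factorial : ℝ) / (n.factorial : ℝ))
        * ((-1 : ℝ) ^ l * (n.choose l : ℝ))
      = ((-1 : ℝ) ^ (n - l) * (-1 : ℝ) ^ l) *
        ((((n - l).factorial : ℝ) * (l.factorial : ℝ) / (n.factorial : ℝ)) * (n.choose l : ℝ)) := by
        ring
    _ = (-1 : ℝ) ^ n := by rw [h1, h2, mul_one]

lemma phi_X_j (j : ℕ) (hj1 : l + 1 ≤ j) (hj2 : j ≤ n - m) :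
    bochnerForm n qM (X ^ j) = -((-1 : ℝ) ^ n * β j) := by
  have hjn : j ≤ n := by omega
  rw [bochner_X_pow n j qM hjn, hq, qM_coeff_nj n l m β j hj1 hj2 hlm]
  have h1 := fact_choose_one n j hjn
  have h2 : (-1 : ℝ) ^ (n - j) * (-1 : ℝ) ^ j = (-1 : ℝ) ^ n := by
    rw [← pow_add, Nat.sub_add_cancel hjn]
  calc (-1 : ℝ) ^ (n - j) * (((n - j).factorial : ℝ) * (j.factorial : ℝ) / (n.factorial : ℝ))
        * (-((-1 : ℝ) ^ j * (n.choose j : ℝ) * β j))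
      = -(((-1 : ℝ) ^ (n - j) * (-1 : ℝ) ^ j) *
        ((((n - j).factorial : ℝ) * (j.factorial : ℝ) / (n.factorial : ℝ)) * (n.choose j : ℝ))
          * β j) := by ring
    _ = -((-1 : ℝ) ^ n * β j) := by rw [h1, h2, mul_one]

lemma phi_binom (j : ℕ) (hj1 : l + 1 ≤ j) (hj2 : j ≤ n - m) :
    bochnerForm n qM (X ^ j + C (β j) * X ^ l) = 0 := by
  have : X ^ j + C (β j) * X ^ l = X ^ j + (β j) • (X ^ l : Polynomial ℝ) := by
    rw [smul_eq_C_mul]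
  rw [← bochnerL_apply, this, map_add, map_smul, bochnerL_apply, bochnerL_apply,
    phi_X_l n l m β qM hq hlm, phi_X_j n l m β qM hq hlm j hj1 hj2]
  simp [smul_eq_mul]
  ring

end vals

lemma degreeLE_eq_degreeLT (n : ℕ) :
    Polynomial.degreeLE ℝ (n : WithBot ℕ) = Polynomial.degreeLT ℝ (n + 1) :=
  (Polynomial.degreeLT_succ_eq_degreeLE).symm

noncomputable def degreeLEEquiv (n : ℕ) :
    Polynomial.degreeLE ℝ (n : WithBot ℕ) ≃ₗ[ℝ] (Fin (n + 1) → ℝ) :=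
  (LinearEquiv.ofEq _ _ (degreeLE_eq_degreeLT n)).trans (Polynomial.degreeLTEquiv ℝ (n + 1))

instance degreeLE_fd (n : ℕ) : FiniteDimensional ℝ (Polynomial.degreeLE ℝ (n : WithBot ℕ)) :=
  Module.Finite.equiv (degreeLEEquiv n).symm

lemma finrank_degreeLE (n : ℕ) :
    Module.finrank ℝ (Polynomial.degreeLE ℝ (n : WithBot ℕ)) = n + 1 := by
  rw [(degreeLEEquiv n).finrank_eq]
  simp

lemma submodule_real_eq_top {W : Submodule ℝ ℝ} {x : ℝ} (hx : x ∈ W) (hx0 : x ≠ 0) : W = ⊤ := by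
  rw [eq_top_iff]
  intro y _
  have := W.smul_mem (y * x⁻¹) hx
  rwa [smul_eq_mul, mul_assoc, inv_mul_cancel₀ hx0, mul_one] at this

lemma finrank_inf_ker (n : ℕ) (φ : Polynomial ℝ →ₗ[ℝ] ℝ) (p0 : Polynomial ℝ)
    (hp0 : p0 ∈ Polynomial.degreeLE ℝ (n : WithBot ℕ)) (hφ : φ p0 ≠ 0) :
    Module.finrank ℝ (Polynomial.degreeLE ℝ (n : WithBot ℕ) ⊓ LinearMap.ker φ :
      Submodule ℝ (Polynomial ℝ)) = n := by
  set D := Polynomial.degreeLE ℝ (n : WithBot ℕ) with hD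
  set ψ := φ.comp D.subtype with hψ
  have hker : LinearMap.ker ψ = Submodule.comap D.subtype (LinearMap.ker φ) :=
    LinearMap.ker_comp _ _
  have hmap : Submodule.map D.subtype (LinearMap.ker ψ) = D ⊓ LinearMap.ker φ := by
    rw [hker, Submodule.map_comap_subtype]
  have hfr : Module.finrank ℝ (D ⊓ LinearMap.ker φ : Submodule ℝ (Polynomial ℝ))
      = Module.finrank ℝ (LinearMap.ker ψ) := by
    rw [← hmap, Submodule.finrank_map_subtype_eq]
  rw [hfr]
  have hrange : LinearMap.range ψ = ⊤ := by
    refine submodule_real_eq_top (x := φ p0) ?_ hφ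
    exact ⟨⟨p0, hp0⟩, rfl⟩
  have hrn := LinearMap.finrank_range_add_finrank_ker ψ
  rw [hrange, finrank_top, finrank_degreeLE n] at hrn
  simp only [Module.finrank_self] at hrn
  omega

/-- The normalized basis family. -/
noncomputable def gfam (l nm : ℕ) (β : ℕ → ℝ) (j : ℕ) : Polynomial ℝ :=
  if l + 1 ≤ j ∧ j ≤ nm then X ^ j + C (β j) * X ^ l else X ^ j

lemma gfam_natDegree (l nm : ℕ) (β : ℕ → ℝ) (j : ℕ) : (gfam l nm β j).natDegree = j := by
  unfold gfam
  split_ifs with h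
  · rw [natDegree_add_eq_left_of_natDegree_lt, natDegree_X_pow]
    calc (C (β j) * X ^ l).natDegree ≤ (X ^ l : Polynomial ℝ).natDegree := natDegree_C_mul_le _ _
      _ < (X ^ j : Polynomial ℝ).natDegree := by rw [natDegree_X_pow, natDegree_X_pow]; omega
  · exact natDegree_X_pow j

lemma gfam_injective (l nm : ℕ) (β : ℕ → ℝ) : Function.Injective (gfam l nm β) := by
  intro a b hab
  rw [← gfam_natDegree l nm β a, ← gfam_natDegree l nm β b, hab]

/-- Linear map killing the coefficient of `X ^ l`. -/
noncomputable def eraseL (l : ℕ) : Polynomial ℝ →ₗ[ℝ] Polynomial ℝ where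
  toFun p := p - C (p.coeff l) * X ^ l
  map_add' p q := by rw [coeff_add, C_add]; ring
  map_smul' c p := by
    simp only [RingHom.id_apply]
    rw [coeff_smul, smul_eq_mul, C_mul, smul_sub, smul_eq_C_mul, smul_eq_C_mul]; ring

lemma eraseL_gfam (l nm : ℕ) (β : ℕ → ℝ) (j : ℕ) (hj : j ≠ l) :
    eraseL l (gfam l nm β j) = X ^ j := by
  unfold gfam eraseL
  simp only [LinearMap.coe_mk, AddHom.coe_mk]
  split_ifs with h
  · rw [coeff_add, coeff_C_mul, coeff_X_pow, if_neg (fun h => hj h.symm), coeff_X_pow,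
      if_pos rfl]
    ring_nf
  · rw [coeff_X_pow, if_neg (fun h => hj h.symm), C_0, zero_mul, sub_zero]

lemma gfam_linearIndependent (l nm : ℕ) (β : ℕ → ℝ) (F : Finset ℕ) (hF : ∀ j ∈ F, j ≠ l) :
    LinearIndependent ℝ (fun j : (F : Set ℕ) => gfam l nm β j) := by
  apply LinearIndependent.of_comp (eraseL l)
  have hb : LinearIndependent ℝ (fun s : ℕ => (monomial s 1 : Polynomial ℝ)) := by
    have := (Polynomial.basisMonomials ℝ).linearIndependent
    rwa [Polynomial.coe_basisMonomials] at this
  have : (eraseL l ∘ fun j : (F : Set ℕ) => gfam l nm β j)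
      = fun j : (F : Set ℕ) => (monomial (j : ℕ) 1 : Polynomial ℝ) := by
    funext j
    rw [Function.comp_apply, eraseL_gfam l nm β j (hF j j.2), X_pow_eq_monomial]
  rw [this]
  exact hb.comp _ Subtype.val_injective

/-- normalized basis of a codimension-one subspace `M ⊂ P_n` whose fundamental
covariant `q_M` has a root of multiplicity `l` at infinity and `m` at zero. -/
theorem stmt15 (n l m : ℕ) (hlm : l + m ≤ n)
    (M : Submodule ℝ (Polynomial ℝ)) (hMle : M ≤ Polynomial.degreeLE ℝ (n : WithBot ℕ))
    (hcodim : Module.finrank ℝ M = n)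
    (hmono1 : ∀ j : ℕ, j < l → (X : Polynomial ℝ) ^ j ∈ M)
    (hmono2 : ∀ j : ℕ, n - m + 1 ≤ j → j ≤ n → (X : Polynomial ℝ) ^ j ∈ M)
    (β : ℕ → ℝ) (qM : Polynomial ℝ)
    (hq : qM = C ((-1 : ℝ) ^ l * (n.choose l : ℝ)) * X ^ (n - l)
      - ∑ j ∈ Finset.Icc (l + 1) (n - m), C ((-1 : ℝ) ^ j * (n.choose j : ℝ) * β j) * X ^ (n - j))
    (hann : ∀ v ∈ M, bochnerForm n qM v = 0) :
    let S : Set (Polynomial ℝ) :=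
      {p | ∃ j : ℕ, j < l ∧ p = X ^ j}
        ∪ {p | ∃ j : ℕ, l + 1 ≤ j ∧ j ≤ n - m ∧ p = X ^ j + C (β j) * X ^ l}
        ∪ {p | ∃ j : ℕ, n - m + 1 ≤ j ∧ j ≤ n ∧ p = X ^ j}
    LinearIndependent ℝ (Subtype.val : S → Polynomial ℝ) ∧ Submodule.span ℝ S = M := by
  intro S
  have hl : l ≤ n := by omega
  have hlnm : l ≤ n - m := by omega
  set D := Polynomial.degreeLE ℝ (n : WithBot ℕ) with hD
  set φ := bochnerL n qM with hφ
  -- X ^ l ∈ D and φ (X ^ l) ≠ 0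
  have hXl_mem : (X : Polynomial ℝ) ^ l ∈ D := by
    rw [hD, Polynomial.mem_degreeLE, degree_X_pow]
    exact_mod_cast hl
  have hφXl : φ ((X : Polynomial ℝ) ^ l) = (-1 : ℝ) ^ n := phi_X_l n l m β qM hq hlm
  have hφne : φ ((X : Polynomial ℝ) ^ l) ≠ 0 := by
    rw [hφXl]
    positivity
  -- M equals D ⊓ ker φ
  have hK : Module.finrank ℝ (D ⊓ LinearMap.ker φ : Submodule ℝ (Polynomial ℝ)) = n :=
    finrank_inf_ker n φ _ hXl_mem hφne
  have hMK : M ≤ D ⊓ LinearMap.ker φ :=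
    le_inf hMle fun v hv => LinearMap.mem_ker.mpr (hann v hv)
  haveI : FiniteDimensional ℝ (D ⊓ LinearMap.ker φ : Submodule ℝ (Polynomial ℝ)) :=
    Submodule.finiteDimensional_of_le inf_le_left
  have hMeq : M = D ⊓ LinearMap.ker φ :=
    Submodule.eq_of_le_of_finrank_eq hMK (by rw [hcodim, hK])
  haveI : FiniteDimensional ℝ M := Submodule.finiteDimensional_of_le hMle
  -- the index finset
  set F : Finset ℕ := Finset.range l ∪ Finset.Icc (l + 1) (n - m) ∪ Finset.Icc (n - m + 1) n
    with hF
  have hFmem : ∀ j : ℕ, j ∈ F ↔ (j < l ∨ (l + 1 ≤ j ∧ j ≤ n - m) ∨ (n - m + 1 ≤ j ∧ j ≤ n)) := by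
    intro j
    simp only [hF, Finset.mem_union, Finset.mem_range, Finset.mem_Icc]
    tauto
  have hFne : ∀ j ∈ F, j ≠ l := by
    intro j hj
    rw [hFmem] at hj
    omega
  -- membership of the family in M
  have hmem : ∀ j ∈ F, gfam l (n - m) β j ∈ M := by
    intro j hj
    rw [hFmem] at hj
    unfold gfam
    rcases hj with h1 | h2 | h3
    · rw [if_neg (by omega)]
      exact hmono1 j h1
    · rw [if_pos h2]
      rw [hMeq]
      refine ⟨?_, LinearMap.mem_ker.mpr ?_⟩
      · rw [hD, SetLike.mem_coe, Polynomial.mem_degreeLE]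
        refine (degree_add_le _ _).trans ?_
        rw [degree_X_pow]
        refine max_le (by exact_mod_cast (by omega : j ≤ n)) ?_
        rw [← smul_eq_C_mul]
        refine (degree_smul_le _ _).trans ?_
        rw [degree_X_pow]
        exact_mod_cast hl
      · exact phi_binom n l m β qM hq hlm j h2.1 h2.2
    · rw [if_neg (by omega)]
      exact hmono2 j h3.1 h3.2
  -- identify S with the image finset
  have hS : S = ↑(F.image (gfam l (n - m) β)) := by
    ext p
    simp only [S, Set.mem_union, Set.mem_setOf_eq, Finset.coe_image, Set.mem_image,
      Finset.mem_coe]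
    constructor
    · rintro ((⟨j, hj, rfl⟩ | ⟨j, hj1, hj2, rfl⟩) | ⟨j, hj1, hj2, rfl⟩)
      · exact ⟨j, (hFmem j).mpr (Or.inl hj), by rw [gfam, if_neg (by omega)]⟩
      · exact ⟨j, (hFmem j).mpr (Or.inr (Or.inl ⟨hj1, hj2⟩)), by rw [gfam, if_pos ⟨hj1, hj2⟩]⟩
      · exact ⟨j, (hFmem j).mpr (Or.inr (Or.inr ⟨hj1, hj2⟩)), by rw [gfam, if_neg (by omega)]⟩
    · rintro ⟨j, hj, rfl⟩
      rw [hFmem] at hj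
      rcases hj with h1 | h2 | h3
      · exact Or.inl (Or.inl ⟨j, h1, by rw [gfam, if_neg (by omega)]⟩)
      · exact Or.inl (Or.inr ⟨j, h2.1, h2.2, by rw [gfam, if_pos h2]⟩)
      · exact Or.inr ⟨j, h3.1, h3.2, by rw [gfam, if_neg (by omega)]⟩
  -- linear independence
  have hli : LinearIndependent ℝ (Subtype.val : S → Polynomial ℝ) := by
    rw [hS, Finset.coe_image]
    exact (linearIndepOn_iff_image ((gfam_injective l (n - m) β).injOn)).mp
      (gfam_linearIndependent l (n - m) β F hFne)
  refine ⟨hli, ?_⟩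
  -- card of F
  have hcard : F.card = n := by
    rw [hF, Finset.card_union_of_disjoint, Finset.card_union_of_disjoint]
    · rw [Finset.card_range, Nat.card_Icc, Nat.card_Icc]
      omega
    · rw [Finset.disjoint_left]
      intro a ha hb
      rw [Finset.mem_range] at ha
      rw [Finset.mem_Icc] at hb
      omega
    · rw [Finset.disjoint_left]
      intro a ha hb
      rw [Finset.mem_union, Finset.mem_range, Finset.mem_Icc] at ha
      rw [Finset.mem_Icc] at hb
      omega
  -- span
  have hle : Submodule.span ℝ S ≤ M := by
    rw [Submodule.span_le, hS, Finset.coe_image]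
    rintro p ⟨j, hj, rfl⟩
    exact hmem j hj
  have hfr : Module.finrank ℝ (Submodule.span ℝ S) = n := by
    rw [hS]
    rw [finrank_span_finset_eq_card _]
    · rw [Finset.card_image_of_injective F (gfam_injective l (n - m) β), hcard]
    · have := hli
      rw [hS] at this
      exact this
  exact Submodule.eq_of_le_of_finrank_eq hle (by rw [hfr, hcodim])
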